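/- arXiv:1402.3999 — 2 statements merged into one kernel-verified Lean document; each statement's English description precedes it below -/
import Mathlib

section
/- Let (𝓕, μ) be a weakly thinnable pair on [0,∞). Then for every A ∈ 𝓕 and every C > 1, one has μ(A) ≤ C · sup_{j∈ℕ} τ_A(C, j). -/
open MeasureTheory Filter Set Topology

noncomputable section

namespace UPN

/-- The half line `[0,∞)` viewed as a subset of `ℝ`. -/
def Ray : Set ℝ := Set.Ici 0

/-- The indicator function `1_A`. -/
def ind (A : Set ℝ) : ℝ → ℝ := Set.indicator A fun _ => (1 : ℝ)

/-- The collection `𝓜` of countable unions `⋃ᵢ [a_{2i-1}, a_{2i})` for a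
nondecreasing nonnegative sequence `a`. -/
def Mcal : Set (Set ℝ) :=
  {A | ∃ a : ℕ → ℝ, 0 ≤ a 0 ∧ Monotone a ∧
        A = ⋃ i : ℕ, Set.Ico (a (2 * i)) (a (2 * i + 1))}

/-- The density function `ρ_A`: `ρ_A(0) = 0` and `ρ_A(x) = (1/x)∫₀ˣ 1_A(y) dy`. -/
def rho (A : Set ℝ) (x : ℝ) : ℝ :=
  if x = 0 then 0 else (1 / x) * ∫ y in (0:ℝ)..x, ind A y

/-- The collection `𝓒` of elements of `𝓜` having natural density. -/
def Ccal : Set (Set ℝ) :=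
  {A | A ∈ Mcal ∧ ∃ l : ℝ, Tendsto (rho A) atTop (𝓝 l)}

/-- The natural density `λ(A) = lim_{x→∞} ρ_A(x)`. -/
def lam (A : Set ℝ) : ℝ := limUnder atTop (rho A)

/-- `S_A(x) = m(A ∩ [0,x))`. -/
def Sfn (A : Set ℝ) (x : ℝ) : ℝ := (volume (A ∩ Set.Ico 0 x)).toReal

/-- The thinning operation `A ∘ B = {x : x ∈ A ∧ S_A(x) ∈ B}`. -/
def thin (A B : Set ℝ) : Set ℝ := {x | x ∈ A ∧ Sfn A x ∈ B}

/-- An f-system on `[0,∞)`: a nonempty collection of subsets of `[0,∞)` closed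
under complements (in `[0,∞)`) and finite disjoint unions. -/
structure IsFSystem (F : Set (Set ℝ)) : Prop where
  nonempty : F.Nonempty
  subset_ray : ∀ A ∈ F, A ⊆ Ray
  compl_mem : ∀ A ∈ F, Ray \ A ∈ F
  union_mem : ∀ A ∈ F, ∀ B ∈ F, A ∩ B = ∅ → A ∪ B ∈ F

/-- A probability pair `(F, μ)` on `[0,∞)`: `F` is an f-system and `μ` is a finitely
additive probability measure on `F` with values in `[0,1]` and `μ([0,∞)) = 1`. -/
structure IsProbPair (F : Set (Set ℝ)) (μ : Set ℝ → ℝ) : Prop where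
  fsystem : IsFSystem F
  nonneg : ∀ A ∈ F, 0 ≤ μ A
  le_one : ∀ A ∈ F, μ A ≤ 1
  ray_eq_one : μ Ray = 1
  additive : ∀ A ∈ F, ∀ B ∈ F, A ∩ B = ∅ → μ (A ∪ B) = μ A + μ B

/-- A weakly thinnable pair (WTP). -/
structure IsWTP (F : Set (Set ℝ)) (μ : Set ℝ → ℝ) : Prop where
  pair : IsProbPair F μ
  Ccal_subset : Ccal ⊆ F
  subset_Mcal : F ⊆ Mcal
  P1 : ∀ C ∈ Ccal, ∀ A ∈ F, thin C A ∈ F ∧ μ (thin C A) = μ C * μ A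
  P2 : ∀ A ∈ F, ∀ B ∈ F, (∀ x : ℝ, Sfn B x ≤ Sfn A x) → μ B ≤ μ A
  P3 : ∀ c : ℝ, 0 ≤ c → μ (Set.Ici c) = 1

/-- Coherence of a probability measure `μ` on an f-system `F` on `[0,∞)`. -/
def Coherent (F : Set (Set ℝ)) (μ : Set ℝ → ℝ) : Prop :=
  ∀ (n : ℕ) (a : Fin n → ℝ) (A : Fin n → Set ℝ), (∀ i, A i ∈ F) →
    0 ≤ ⨆ x : Ray, ∑ i, a i * (ind (A i) ↑x - μ (A i))

/-- `σ_A(D,x) = (1/D) ∫_x^{x+D} 1_A(y) dy`. -/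
def sigmaFn (A : Set ℝ) (D x : ℝ) : ℝ := (1 / D) * ∫ y in x..(x + D), ind A y

/-- `U(A) = limsup_{D→∞} sup_{x>0} σ_A(D,x)`. -/
def Ufn (A : Set ℝ) : ℝ :=
  limsup (fun D => ⨆ x : Set.Ioi (0:ℝ), sigmaFn A D ↑x) atTop

/-- `L(A) = liminf_{D→∞} inf_{x>0} σ_A(D,x)`. -/
def Lfn (A : Set ℝ) : ℝ :=
  liminf (fun D => ⨅ x : Set.Ioi (0:ℝ), sigmaFn A D ↑x) atTop

/-- `𝓦^uni = {A ∈ 𝓜 : L(A) = U(A)}`. -/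
def Wuni : Set (Set ℝ) := {A | A ∈ Mcal ∧ Lfn A = Ufn A}

/-- `log(A) = {log a : a ∈ A ∩ [1,∞)}`. -/
def logSet (A : Set ℝ) : Set ℝ := Real.log '' (A ∩ Set.Ici 1)

/-- `𝓐^uni = {A ∈ 𝓜 : log(A) ∈ 𝓦^uni}`. -/
def Auni : Set (Set ℝ) := {A | A ∈ Mcal ∧ logSet A ∈ Wuni}

/-- `α(A) = λ(log(A))`. -/
def alphaFn (A : Set ℝ) : ℝ := lam (logSet A)

/-- `ξ_A(D,x) = (1/log D) ∫_x^{Dx} ρ_A(y)/y dy`. -/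
def xi (A : Set ℝ) (D x : ℝ) : ℝ :=
  (1 / Real.log D) * ∫ y in x..(D * x), rho A y / y

/-- Membership in `𝓟`: `s` is a sequence in `(1,∞)` tending to `∞` and `f` is a
sequence in `(1,∞)`. -/
def memP (s f : ℕ → ℝ) : Prop :=
  (∀ n, 1 < s n) ∧ Tendsto s atTop atTop ∧ ∀ n, 1 < f n

/-- `𝓐^{s,f} = {A ∈ 𝓜 : lim_n ξ_A(s_n,f_n) exists}`. -/
def Asf (s f : ℕ → ℝ) : Set (Set ℝ) :=
  {A | A ∈ Mcal ∧ ∃ l : ℝ, Tendsto (fun n => xi A (s n) (f n)) atTop (𝓝 l)}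

/-- `α^{s,f}(A) = lim_n ξ_A(s_n,f_n)`. -/
def alphasf (s f : ℕ → ℝ) (A : Set ℝ) : ℝ :=
  limUnder atTop fun n => xi A (s n) (f n)

/-- `τ_A(C,j)`; here `j : ℕ` starting from `0` corresponds to the interval
`[C^j, C^{j+1})`, i.e. to the paper's `τ_A(C, j+1)`. -/
def tau (A : Set ℝ) (C : ℝ) (j : ℕ) : ℝ :=
  (1 / (C ^ j * (C - 1))) * ∫ y in (C ^ j : ℝ)..(C ^ (j + 1)), ind A y

/-- `U^*(C,A) = limsup_{n→∞} sup_k (1/n) Σ_{j=k}^{k+n-1} τ_A(C,j)`. -/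
def Ustar (C : ℝ) (A : Set ℝ) : ℝ :=
  limsup (fun n : ℕ => ⨆ k : ℕ, (1 / (n : ℝ)) * ∑ i ∈ Finset.range n, tau A C (k + i)) atTop

lemma mcal_measurable {A : Set ℝ} (hA : A ∈ Mcal) : MeasurableSet A := by
  obtain ⟨a, -, -, rfl⟩ := hA
  exact MeasurableSet.iUnion fun i => measurableSet_Ico

lemma vol_inter_Ico_ne_top (A : Set ℝ) (a b : ℝ) : volume (A ∩ Set.Ico a b) ≠ ⊤ := by
  refine ne_top_of_le_ne_top ?_ (measure_mono inter_subset_right)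
  simp [Real.volume_Ico]

lemma Sfn_nonneg (A : Set ℝ) (x : ℝ) : 0 ≤ Sfn A x := ENNReal.toReal_nonneg

lemma vol_Ioc_eq_inter_Ico (A : Set ℝ) (a b : ℝ) :
    volume (Set.Ioc a b ∩ A) = volume (A ∩ Set.Ico a b) := by
  apply le_antisymm
  · calc volume (Set.Ioc a b ∩ A) ≤ volume ((A ∩ Set.Ico a b) ∪ {b}) := by
          apply measure_mono
          rintro x ⟨⟨h1, h2⟩, h3⟩
          rcases lt_or_eq_of_le h2 with h | h
          · exact Or.inl ⟨h3, h1.le, h⟩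
          · exact Or.inr h
    _ ≤ volume (A ∩ Set.Ico a b) + volume ({b} : Set ℝ) := measure_union_le _ _
    _ = volume (A ∩ Set.Ico a b) := by simp
  · calc volume (A ∩ Set.Ico a b) ≤ volume ((Set.Ioc a b ∩ A) ∪ {a}) := by
          apply measure_mono
          rintro x ⟨h3, h1, h2⟩
          rcases lt_or_eq_of_le h1 with h | h
          · exact Or.inl ⟨⟨h, h2.le⟩, h3⟩
          · exact Or.inr (by simp [h.symm])
    _ ≤ volume (Set.Ioc a b ∩ A) + volume ({a} : Set ℝ) := measure_union_le _ _
    _ = volume (Set.Ioc a b ∩ A) := by simp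

lemma integral_ind {A : Set ℝ} (hA : MeasurableSet A) {a b : ℝ} (hab : a ≤ b) :
    ∫ y in a..b, ind A y = (volume (A ∩ Set.Ico a b)).toReal := by
  rw [intervalIntegral.integral_of_le hab]
  unfold ind
  rw [MeasureTheory.setIntegral_indicator hA, MeasureTheory.setIntegral_const]
  rw [smul_eq_mul, mul_one, measureReal_def, vol_Ioc_eq_inter_Ico]

/-- periodic set with offset `o` and density `d` -/
def per (o d : ℝ) : Set ℝ := ⋃ k : ℕ, Set.Ico ((k : ℝ) + o) ((k : ℝ) + o + d)

lemma per_measurable (o d : ℝ) : MeasurableSet (per o d) :=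
  MeasurableSet.iUnion fun _ => measurableSet_Ico

lemma per_mem_Mcal {o d : ℝ} (ho : 0 ≤ o) (hd : 0 ≤ d) (hod : o + d ≤ 1) :
    per o d ∈ Mcal := by
  refine ⟨fun n => ((n / 2 : ℕ) : ℝ) + if n % 2 = 0 then o else o + d, by simp [ho], ?_, ?_⟩
  · apply monotone_nat_of_le_succ
    intro n
    rcases Nat.even_or_odd n with ⟨m, hm⟩ | ⟨m, hm⟩
    · subst hm
      have h1 : (m + m) / 2 = m := by omega
      have h2 : (m + m + 1) / 2 = m := by omega
      have h3 : (m + m) % 2 = 0 := by omega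
      have h4 : (m + m + 1) % 2 = 1 := by omega
      simp [h1, h2, h3, h4]
      linarith
    · subst hm
      have h1 : (2 * m + 1) / 2 = m := by omega
      have h2 : (2 * m + 1 + 1) / 2 = m + 1 := by omega
      have h3 : (2 * m + 1) % 2 = 1 := by omega
      have h4 : (2 * m + 1 + 1) % 2 = 0 := by omega
      simp [h1, h2, h3, h4]
      have : d ≤ 1 := le_trans (by linarith) hod
      push_cast
      linarith
  · unfold per
    apply Set.iUnion_congr
    intro i
    have h1 : (2 * i) / 2 = i := by omega
    have h2 : (2 * i + 1) / 2 = i := by omega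
    have h3 : (2 * i) % 2 = 0 := by omega
    have h4 : (2 * i + 1) % 2 = 1 := by omega
    simp [h1, h2, h3, h4, add_assoc]

lemma Ici_mem_Mcal {c : ℝ} (hc : 0 ≤ c) : Set.Ici c ∈ Mcal := by
  refine ⟨fun n => c + (((n + 1) / 2 : ℕ) : ℝ), by simpa, ?_, ?_⟩
  · apply monotone_nat_of_le_succ
    intro n
    have : (n + 1) / 2 ≤ (n + 1 + 1) / 2 := by omega
    have := (Nat.cast_le (α := ℝ)).2 this
    linarith
  · ext x
    simp only [Set.mem_Ici, Set.mem_iUnion, Set.mem_Ico]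
    constructor
    · intro hx
      refine ⟨⌊x - c⌋₊, ?_, ?_⟩
      · have h1 : (2 * ⌊x - c⌋₊ + 1) / 2 = ⌊x - c⌋₊ := by omega
        rw [h1]
        have := Nat.floor_le (sub_nonneg.2 hx)
        linarith
      · have h2 : (2 * ⌊x - c⌋₊ + 1 + 1) / 2 = ⌊x - c⌋₊ + 1 := by omega
        rw [h2]
        have := Nat.lt_floor_add_one (x - c)
        push_cast
        linarith
    · rintro ⟨i, h1, -⟩
      have h3 : (2 * i + 1) / 2 = i := by omega
      rw [h3] at h1
      have : (0:ℝ) ≤ i := Nat.cast_nonneg i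
      linarith

lemma Sfn_eq_integral {A : Set ℝ} (hA : MeasurableSet A) {x : ℝ} (hx : 0 ≤ x) :
    Sfn A x = ∫ y in (0:ℝ)..x, ind A y := (integral_ind hA hx).symm

lemma tendsto_rho_of_bounds {A : Set ℝ} (hA : MeasurableSet A) (d e x₀ : ℝ)
    (h1 : ∀ x ≥ x₀, d * x - e ≤ Sfn A x) (h2 : ∀ x ≥ x₀, Sfn A x ≤ d * x + e) :
    Tendsto (rho A) atTop (𝓝 d) := by
  have hlow : Tendsto (fun x : ℝ => d - e * x⁻¹) atTop (𝓝 d) := by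
    simpa using tendsto_const_nhds.sub (tendsto_inv_atTop_zero.const_mul e)
  have hhigh : Tendsto (fun x : ℝ => d + e * x⁻¹) atTop (𝓝 d) := by
    simpa using tendsto_const_nhds.add (tendsto_inv_atTop_zero.const_mul e)
  apply tendsto_of_tendsto_of_tendsto_of_le_of_le' hlow hhigh
  · filter_upwards [eventually_ge_atTop x₀, eventually_gt_atTop (0:ℝ)] with x hx hx0
    have hrho : rho A x = (1/x) * Sfn A x := by
      rw [rho, if_neg (ne_of_gt hx0), Sfn_eq_integral hA hx0.le]
    rw [hrho, one_div]
    have key := mul_le_mul_of_nonneg_left (h1 x hx) (inv_nonneg.2 hx0.le)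
    have expand : x⁻¹ * (d * x - e) = d - e * x⁻¹ := by field_simp
    linarith [key, expand.symm.le]
  · filter_upwards [eventually_ge_atTop x₀, eventually_gt_atTop (0:ℝ)] with x hx hx0
    have hrho : rho A x = (1/x) * Sfn A x := by
      rw [rho, if_neg (ne_of_gt hx0), Sfn_eq_integral hA hx0.le]
    rw [hrho, one_div]
    have key := mul_le_mul_of_nonneg_left (h2 x hx) (inv_nonneg.2 hx0.le)
    have expand : x⁻¹ * (d * x + e) = d + e * x⁻¹ := by field_simp
    linarith [key, expand.le]

lemma Sfn_Ici {c : ℝ} (hc : 0 ≤ c) (x : ℝ) : Sfn (Set.Ici c) x = max (x - c) 0 := by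
  have : Set.Ici c ∩ Set.Ico 0 x = Set.Ico c x := by
    ext y
    simp only [Set.mem_inter_iff, Set.mem_Ici, Set.mem_Ico]
    constructor
    · rintro ⟨h1, -, h3⟩; exact ⟨h1, h3⟩
    · rintro ⟨h1, h2⟩; exact ⟨h1, hc.trans h1, h2⟩
  rw [Sfn, this, Real.volume_Ico, ENNReal.toReal_ofReal']

lemma Ici_mem_Ccal {c : ℝ} (hc : 0 ≤ c) : Set.Ici c ∈ Ccal := by
  refine ⟨Ici_mem_Mcal hc, 1, tendsto_rho_of_bounds measurableSet_Ici 1 c c ?_ ?_⟩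
  · intro x hx
    rw [Sfn_Ici hc]
    have : x - c ≤ max (x - c) 0 := le_max_left _ _
    linarith
  · intro x hx
    rw [Sfn_Ici hc]
    have h0 : max (x - c) 0 = x - c := max_eq_left (by linarith)
    rw [h0]; linarith

lemma per_blocks_disjoint {o d : ℝ} (ho : 0 ≤ o) (hod : o + d ≤ 1) {k k' : ℕ} (h : k ≠ k') :
    Disjoint (Set.Ico ((k:ℝ) + o) ((k:ℝ) + o + d)) (Set.Ico ((k':ℝ) + o) ((k':ℝ) + o + d)) := by
  rw [Set.disjoint_left]
  rintro y ⟨h1, h2⟩ ⟨h3, h4⟩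
  rcases Nat.lt_or_ge k k' with hk | hk
  · have : (k:ℝ) + 1 ≤ k' := by exact_mod_cast Nat.succ_le_of_lt hk
    linarith
  · have hk' : k' < k := lt_of_le_of_ne hk (Ne.symm h)
    have : (k':ℝ) + 1 ≤ k := by exact_mod_cast Nat.succ_le_of_lt hk'
    linarith

lemma Sfn_per_lower {o d : ℝ} (ho : 0 ≤ o) (hd : 0 ≤ d) (hod : o + d ≤ 1)
    {x : ℝ} (hx : 1 ≤ x) : d * (x - 1) ≤ Sfn (per o d) x := by
  set n := ⌊x⌋₊ with hn
  have hx0 : (0:ℝ) ≤ x := by linarith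
  have hsub : (⋃ k ∈ Finset.range n, Set.Ico ((k:ℝ) + o) ((k:ℝ) + o + d)) ⊆
      per o d ∩ Set.Ico 0 x := by
    intro y hy
    simp only [Set.mem_iUnion, Finset.mem_range] at hy
    obtain ⟨k, hk, h1, h2⟩ := hy
    refine ⟨Set.mem_iUnion.2 ⟨k, h1, h2⟩, ?_, ?_⟩
    · have : (0:ℝ) ≤ (k:ℝ) + o := by positivity
      linarith
    · have hkn : (k:ℝ) + 1 ≤ n := by exact_mod_cast Nat.succ_le_of_lt hk
      have hnx : (n:ℝ) ≤ x := Nat.floor_le hx0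
      linarith
  have hvol : volume (⋃ k ∈ Finset.range n, Set.Ico ((k:ℝ) + o) ((k:ℝ) + o + d)) =
      ENNReal.ofReal ((n:ℝ) * d) := by
    rw [measure_biUnion_finset ?hd fun _ _ => measurableSet_Ico]
    · have : ∀ k ∈ Finset.range n, volume (Set.Ico ((k:ℝ) + o) ((k:ℝ) + o + d)) =
          ENNReal.ofReal d := by
        intro k _
        rw [Real.volume_Ico]; congr 1; ring
      rw [Finset.sum_congr rfl this, Finset.sum_const, Finset.card_range, nsmul_eq_mul,
        ← ENNReal.ofReal_natCast n, ← ENNReal.ofReal_mul (Nat.cast_nonneg n)]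
    case hd =>
      intro i _ j _ hij
      exact per_blocks_disjoint ho hod hij
  have hle := measure_mono (μ := volume) hsub
  rw [hvol] at hle
  have h2 : ((n:ℝ) * d) ≤ Sfn (per o d) x := by
    rw [Sfn]
    have := ENNReal.toReal_mono (vol_inter_Ico_ne_top _ _ _) hle
    rwa [ENNReal.toReal_ofReal (by positivity)] at this
  have h3 : x - 1 ≤ (n:ℝ) := by
    have := Nat.sub_one_lt_floor x
    rw [hn]; linarith
  nlinarith [h3, hd]

lemma Sfn_per_upper {o d : ℝ} (ho : 0 ≤ o) (hd : 0 ≤ d)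
    {x : ℝ} (hx : 0 ≤ x) : Sfn (per o d) x ≤ d * (x + 1) := by
  set n := ⌊x⌋₊ with hn
  have hsub : per o d ∩ Set.Ico 0 x ⊆
      ⋃ k ∈ Finset.range (n + 1), Set.Ico ((k:ℝ) + o) ((k:ℝ) + o + d) := by
    rintro y ⟨hy1, hy2, hy3⟩
    obtain ⟨k, hk⟩ := Set.mem_iUnion.1 hy1
    simp only [Set.mem_iUnion, Finset.mem_range]
    refine ⟨k, ?_, hk⟩
    have h1 : (k:ℝ) ≤ y := le_trans (by linarith [hk.1]) (le_refl y)
    have h2 : (k:ℝ) < n + 1 := by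
      calc (k:ℝ) ≤ y := by linarith [hk.1]
      _ < x := hy3
      _ < n + 1 := by push_cast; exact Nat.lt_floor_add_one x
    exact_mod_cast h2
  have hle := measure_mono (μ := volume) hsub
  have hle2 : volume (⋃ k ∈ Finset.range (n + 1), Set.Ico ((k:ℝ) + o) ((k:ℝ) + o + d)) ≤
      ENNReal.ofReal (((n:ℝ) + 1) * d) := by
    refine le_trans (measure_biUnion_finset_le _ _) ?_
    have : ∀ k ∈ Finset.range (n+1), volume (Set.Ico ((k:ℝ) + o) ((k:ℝ) + o + d)) =
        ENNReal.ofReal d := by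
      intro k _
      rw [Real.volume_Ico]; congr 1; ring
    rw [Finset.sum_congr rfl this, Finset.sum_const, Finset.card_range, nsmul_eq_mul]
    rw [← ENNReal.ofReal_natCast (n+1), ← ENNReal.ofReal_mul (Nat.cast_nonneg (n+1))]
    push_cast
    exact le_refl _
  have := ENNReal.toReal_le_of_le_ofReal (by positivity) (hle.trans hle2)
  rw [Sfn]
  refine le_trans this ?_
  have h3 : (n:ℝ) ≤ x := Nat.floor_le hx
  nlinarith [h3, hd]

lemma per_mem_Ccal {o d : ℝ} (ho : 0 ≤ o) (hd : 0 ≤ d) (hod : o + d ≤ 1) :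
    per o d ∈ Ccal := by
  refine ⟨per_mem_Mcal ho hd hod, d, tendsto_rho_of_bounds (per_measurable o d) d d 1 ?_ ?_⟩
  · intro x hx
    have := Sfn_per_lower ho hd hod hx
    linarith [this]
  · intro x hx
    have := Sfn_per_upper ho hd (o := o) (by linarith : (0:ℝ) ≤ x)
    linarith [this]

section pair
variable {F : Set (Set ℝ)} {μ : Set ℝ → ℝ}

lemma ray_mem (h : IsProbPair F μ) : Ray ∈ F := by
  obtain ⟨A, hA⟩ := h.fsystem.nonempty
  have h1 : Ray \ A ∈ F := h.fsystem.compl_mem A hA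
  have h2 : A ∪ (Ray \ A) = Ray := by
    apply Set.union_diff_cancel
    exact h.fsystem.subset_ray A hA
  have h3 : A ∩ (Ray \ A) = ∅ := by
    ext x; simp only [Set.mem_inter_iff, Set.mem_diff, Set.mem_empty_iff_false, iff_false]
    rintro ⟨h4, -, h5⟩; exact h5 h4
  rw [← h2]
  exact h.fsystem.union_mem A hA _ h1 h3

lemma empty_mem (h : IsProbPair F μ) : (∅ : Set ℝ) ∈ F := by
  have := h.fsystem.compl_mem Ray (ray_mem h)
  rwa [Set.diff_self] at this

lemma mu_empty (h : IsProbPair F μ) : μ ∅ = 0 := by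
  have h1 := h.additive Ray (ray_mem h) ∅ (empty_mem h) (by simp)
  rw [Set.union_empty, h.ray_eq_one] at h1
  linarith

lemma mu_biUnion (h : IsProbPair F μ) (E : ℕ → Set ℝ) (n : ℕ)
    (hE : ∀ i, i < n → E i ∈ F)
    (hd : ∀ i j, i < n → j < n → i ≠ j → Disjoint (E i) (E j)) :
    (⋃ i ∈ Finset.range n, E i) ∈ F ∧
      μ (⋃ i ∈ Finset.range n, E i) = ∑ i ∈ Finset.range n, μ (E i) := by
  induction n with
  | zero => simpa using ⟨empty_mem h, mu_empty h⟩
  | succ n ih =>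
    obtain ⟨hU, hμ⟩ := ih (fun i hi => hE i (by omega)) (fun i j hi hj => hd i j (by omega) (by omega))
    have hrw : (⋃ i ∈ Finset.range (n+1), E i) = (⋃ i ∈ Finset.range n, E i) ∪ E n := by
      rw [Finset.range_add_one, Finset.set_biUnion_insert, Set.union_comm]
    have hdisj : (⋃ i ∈ Finset.range n, E i) ∩ E n = ∅ := by
      ext x
      simp only [Set.mem_inter_iff, Set.mem_iUnion, Finset.mem_range,
        Set.mem_empty_iff_false, iff_false]
      rintro ⟨⟨i, hi, hxi⟩, hxn⟩
      exact Set.disjoint_left.1 (hd i n (by omega) (by omega) (by omega)) hxi hxn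
    constructor
    · rw [hrw]
      exact h.fsystem.union_mem _ hU _ (hE n (by omega)) hdisj
    · rw [hrw, h.additive _ hU _ (hE n (by omega)) hdisj, hμ, Finset.sum_range_succ]

end pair

lemma per_subset_ray (o d : ℝ) (ho : 0 ≤ o) : per o d ⊆ Ray := by
  intro x hx
  obtain ⟨k, hk1, -⟩ := Set.mem_iUnion.1 hx
  have : (0:ℝ) ≤ (k:ℝ) + o := by positivity
  exact le_trans this hk1

lemma thin_Ici {c : ℝ} (hc : 0 ≤ c) (B : Set ℝ) :
    thin (Set.Ici c) B = {x | c ≤ x ∧ x - c ∈ B} := by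
  unfold thin
  ext x
  simp only [Set.mem_setOf_eq, Set.mem_Ici]
  constructor
  · rintro ⟨h1, h2⟩
    rw [Sfn_Ici hc, max_eq_left (by linarith)] at h2
    exact ⟨h1, h2⟩
  · rintro ⟨h1, h2⟩
    refine ⟨h1, ?_⟩
    rw [Sfn_Ici hc, max_eq_left (by linarith)]
    exact h2

lemma thin_Ici_per {c d : ℝ} (hc : 0 ≤ c) (hd : 0 ≤ d) :
    thin (Set.Ici c) (per 0 d) = per c d := by
  rw [thin_Ici hc]
  ext x
  simp only [Set.mem_setOf_eq, per, Set.mem_iUnion, Set.mem_Ico]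
  constructor
  · rintro ⟨h1, k, h2, h3⟩
    exact ⟨k, by linarith, by linarith⟩
  · rintro ⟨k, h2, h3⟩
    have hk : (0:ℝ) ≤ (k:ℝ) := Nat.cast_nonneg k
    exact ⟨by linarith, k, by linarith, by linarith⟩

lemma Sfn_thin_Ici {c : ℝ} (hc : 0 ≤ c) {A : Set ℝ} (hA : A ⊆ Ray) (x : ℝ) :
    Sfn (thin (Set.Ici c) A) x = Sfn A (x - c) := by
  rw [thin_Ici hc]
  have hset : {x : ℝ | c ≤ x ∧ x - c ∈ A} ∩ Set.Ico 0 x =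
      (fun y => -c + y) ⁻¹' (A ∩ Set.Ico 0 (x - c)) := by
    ext y
    simp only [Set.mem_inter_iff, Set.mem_setOf_eq, Set.mem_Ico, Set.mem_preimage]
    constructor
    · rintro ⟨⟨h1, h2⟩, h3, h4⟩
      have : (0:ℝ) ≤ -c + y := by linarith
      exact ⟨by rwa [neg_add_eq_sub], this, by linarith⟩
    · rintro ⟨h1, h2, h3⟩
      rw [neg_add_eq_sub] at h1
      have h0 : 0 ≤ y - c := h2.trans_eq (by ring) |>.trans (le_refl _)
      exact ⟨⟨by linarith, h1⟩, by linarith, by linarith⟩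
  rw [Sfn, hset, measure_preimage_add volume (-c) _, Sfn]

lemma per_partition {b : ℕ} (hb : 0 < b) :
    (⋃ i ∈ Finset.range b, per ((i:ℝ)/b) (1/b)) = Ray := by
  have hbpos : (0:ℝ) < b := Nat.cast_pos.2 hb
  apply Set.Subset.antisymm
  · intro x hx
    simp only [Set.mem_iUnion, Finset.mem_range] at hx
    obtain ⟨i, -, hxi⟩ := hx
    exact per_subset_ray _ _ (by positivity) hxi
  · intro x hx
    have hx0 : (0:ℝ) ≤ x := hx
    set k := ⌊x⌋₊ with hk
    have hk1 : (k:ℝ) ≤ x := Nat.floor_le hx0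
    have hk2 : x < k + 1 := Nat.lt_floor_add_one x
    set f := x - k with hf
    have hf0 : 0 ≤ f := by simp [hf]; linarith
    have hf1 : f < 1 := by simp [hf]; linarith
    set i := ⌊(b:ℝ) * f⌋₊ with hi
    have hib : i < b := by
      have : (b:ℝ) * f < b := by nlinarith
      have h2 : (i:ℝ) ≤ (b:ℝ) * f := Nat.floor_le (by positivity)
      have : (i:ℝ) < (b:ℝ) := by linarith
      exact_mod_cast this
    simp only [Set.mem_iUnion, Finset.mem_range]
    refine ⟨i, hib, ?_⟩
    refine Set.mem_iUnion.2 ⟨k, ?_, ?_⟩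
    · have h2 : (i:ℝ) ≤ (b:ℝ) * f := Nat.floor_le (by positivity)
      have : (i:ℝ)/b ≤ f := by rw [div_le_iff₀ hbpos]; linarith
      linarith
    · have h3 : (b:ℝ) * f < i + 1 := Nat.lt_floor_add_one _
      have : f < ((i:ℝ)/b + 1/b) := by
        rw [← add_div, lt_div_iff₀ hbpos]; linarith
      linarith

lemma per_pair_disjoint {b : ℕ} (hb : 0 < b) {i j : ℕ} (hi : i < b) (hj : j < b)
    (hij : i ≠ j) : Disjoint (per ((i:ℝ)/b) (1/b)) (per ((j:ℝ)/b) (1/b)) := by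
  have hbpos : (0:ℝ) < b := Nat.cast_pos.2 hb
  rw [Set.disjoint_left]
  intro x hxi hxj
  obtain ⟨k, hk1, hk2⟩ := Set.mem_iUnion.1 hxi
  obtain ⟨k', hk1', hk2'⟩ := Set.mem_iUnion.1 hxj
  -- x lies in [k, k+1) and [k', k'+1)
  have hup : ∀ m : ℕ, m < b → ((m:ℝ)/b + 1/b) ≤ 1 := by
    intro m hm
    rw [← add_div, div_le_one hbpos]
    exact_mod_cast Nat.succ_le_of_lt hm
  have hxk1 : (k:ℝ) ≤ x := by
    have h0 : (0:ℝ) ≤ (i:ℝ)/b := by positivity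
    linarith
  have hxk2 : x < (k:ℝ) + 1 := lt_of_lt_of_le hk2 (by linarith [hup i hi])
  have hxk1' : (k':ℝ) ≤ x := by
    have h0 : (0:ℝ) ≤ (j:ℝ)/b := by positivity
    linarith
  have hxk2' : x < (k':ℝ) + 1 := lt_of_lt_of_le hk2' (by linarith [hup j hj])
  have hkk' : k = k' := by
    have h1 : (k:ℝ) < k' + 1 := by linarith
    have h2 : (k':ℝ) < k + 1 := by linarith
    have h1' : k < k' + 1 := by exact_mod_cast h1
    have h2' : k' < k + 1 := by exact_mod_cast h2
    omega
  subst hkk'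
  -- now compare the fractional parts
  have hij1 : (j:ℝ)/b < (i:ℝ)/b + 1/b := by linarith
  have hij2 : (i:ℝ)/b < (j:ℝ)/b + 1/b := by linarith
  rw [← add_div, div_lt_div_iff₀ hbpos hbpos] at hij1 hij2
  have h1 : (j:ℝ) < i + 1 := by nlinarith
  have h2 : (i:ℝ) < j + 1 := by nlinarith
  have h1' : j < i + 1 := by exact_mod_cast h1
  have h2' : i < j + 1 := by exact_mod_cast h2
  omega

lemma per_div_mem_Ccal {b : ℕ} (hb : 0 < b) {i : ℕ} (hi : i < b) :
    per ((i:ℝ)/b) (1/b) ∈ Ccal := by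
  have hbpos : (0:ℝ) < b := Nat.cast_pos.2 hb
  refine per_mem_Ccal (by positivity) (by positivity) ?_
  rw [← add_div, div_le_one hbpos]
  exact_mod_cast Nat.succ_le_of_lt hi

section wtp
variable {F : Set (Set ℝ)} {μ : Set ℝ → ℝ}

lemma mu_shift (hW : IsWTP F μ) {c : ℝ} (hc : 0 ≤ c) {B : Set ℝ} (hB : B ∈ F) :
    thin (Set.Ici c) B ∈ F ∧ μ (thin (Set.Ici c) B) = μ B := by
  obtain ⟨h1, h2⟩ := hW.P1 (Set.Ici c) (Ici_mem_Ccal hc) B hB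
  exact ⟨h1, by rw [h2, hW.P3 c hc, one_mul]⟩

lemma mu_per_div (hW : IsWTP F μ) {b : ℕ} (hb : 0 < b) {i : ℕ} (hi : i < b) :
    μ (per ((i:ℝ)/b) (1/b)) = 1/b := by
  have hbpos : (0:ℝ) < b := Nat.cast_pos.2 hb
  have hmemF : ∀ j : ℕ, j < b → per ((j:ℝ)/b) (1/b) ∈ F := fun j hj =>
    hW.Ccal_subset (per_div_mem_Ccal hb hj)
  have hzero : per ((0:ℝ)) (1/b) ∈ F := by
    have := hmemF 0 hb
    simpa using this
  -- μ of each shifted copy equals μ of the base copy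
  have hshift : ∀ j : ℕ, j < b → μ (per ((j:ℝ)/b) (1/b)) = μ (per 0 (1/b)) := by
    intro j hj
    have hc : (0:ℝ) ≤ (j:ℝ)/b := by positivity
    have := (mu_shift hW hc hzero).2
    rwa [thin_Ici_per hc (by positivity)] at this
  -- sum over the partition
  have hsum := (mu_biUnion hW.pair (fun j => per ((j:ℝ)/b) (1/b)) b
    (fun j hj => hmemF j hj) (fun i' j' hi' hj' hij' => per_pair_disjoint hb hi' hj' hij')).2
  rw [per_partition hb, hW.pair.ray_eq_one] at hsum
  have hconst : ∀ j ∈ Finset.range b, μ (per ((j:ℝ)/b) (1/b)) = μ (per 0 (1/b)) := by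
    intro j hj
    exact hshift j (Finset.mem_range.1 hj)
  rw [Finset.sum_congr rfl hconst, Finset.sum_const, Finset.card_range, nsmul_eq_mul] at hsum
  have hbase : μ (per 0 (1/b)) = 1/b := by
    field_simp at hsum ⊢
    linarith
  rw [hshift i hi, hbase]

end wtp

section tauf
variable {A : Set ℝ} {C : ℝ}

lemma vol_block_eq_tau (hA : MeasurableSet A) (hC : 1 < C) (j : ℕ) :
    (volume (A ∩ Set.Ico (C^j) (C^(j+1)))).toReal = tau A C j * (C^j * (C-1)) := by
  have hCpos : (0:ℝ) < C := by linarith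
  have hle : (C:ℝ)^j ≤ C^(j+1) := by
    apply pow_le_pow_right₀ (by linarith)
    omega
  have hne : (C:ℝ)^j * (C-1) ≠ 0 :=
    ne_of_gt (mul_pos (pow_pos hCpos j) (by linarith))
  rw [tau, integral_ind hA hle]
  field_simp
  rw [mul_div_cancel_right₀ _ (sub_ne_zero.2 hC.ne')]

lemma tau_nonneg (hA : MeasurableSet A) (hC : 1 < C) (j : ℕ) : 0 ≤ tau A C j := by
  rw [tau]
  have h1 : (0:ℝ) ≤ 1 / (C^j * (C-1)) :=
    le_of_lt (div_pos one_pos (mul_pos (pow_pos (by linarith) j) (by linarith)))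
  have h2 : (0:ℝ) ≤ ∫ y in (C^j : ℝ)..(C^(j+1)), ind A y := by
    rw [integral_ind hA (by apply pow_le_pow_right₀ (by linarith); omega)]
    exact ENNReal.toReal_nonneg
  positivity

lemma tau_le_one (hA : MeasurableSet A) (hC : 1 < C) (j : ℕ) : tau A C j ≤ 1 := by
  have hCpos : (0:ℝ) < C^j * (C-1) := mul_pos (pow_pos (by linarith) j) (by linarith)
  have key : (volume (A ∩ Set.Ico (C^j) (C^(j+1)))).toReal ≤ C^j * (C-1) := by
    have h1 : volume (A ∩ Set.Ico (C^j) (C^(j+1))) ≤ ENNReal.ofReal (C^j * (C-1)) := by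
      refine le_trans (measure_mono Set.inter_subset_right) ?_
      rw [Real.volume_Ico]
      apply ENNReal.ofReal_le_ofReal
      ring_nf
      nlinarith [pow_pos (lt_trans zero_lt_one hC) j]
    exact ENNReal.toReal_le_of_le_ofReal hCpos.le h1
  have := vol_block_eq_tau hA hC j
  nlinarith [this, key]

lemma tau_bddAbove (hA : MeasurableSet A) (hC : 1 < C) :
    BddAbove (Set.range (tau A C)) := by
  refine ⟨1, ?_⟩
  rintro _ ⟨j, rfl⟩
  exact tau_le_one hA hC j

lemma Sfn_le_self {A : Set ℝ} {y : ℝ} (hy : 0 ≤ y) : Sfn A y ≤ y := by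
  rw [Sfn]
  have h1 : volume (A ∩ Set.Ico 0 y) ≤ ENNReal.ofReal y := by
    refine le_trans (measure_mono Set.inter_subset_right) ?_
    rw [Real.volume_Ico]; simp
  exact ENNReal.toReal_le_of_le_ofReal hy h1

lemma Sfn_linear_bound (hA : MeasurableSet A) (hC : 1 < C) {y : ℝ} (hy : 0 ≤ y) :
    Sfn A y ≤ C * (⨆ j : ℕ, tau A C j) * y + 1 := by
  have hCpos : (0:ℝ) < C := by linarith
  set t := ⨆ j : ℕ, tau A C j with ht
  have ht0 : 0 ≤ t := Real.iSup_nonneg (tau_nonneg hA hC)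
  have htau_le : ∀ j : ℕ, tau A C j ≤ t := fun j => le_ciSup (tau_bddAbove hA hC) j
  rcases le_or_gt y 1 with hy1 | hy1
  · have := Sfn_le_self (A := A) hy
    nlinarith [mul_nonneg (mul_nonneg hCpos.le ht0) hy]
  · obtain ⟨J, hJ1, hJ2⟩ := exists_nat_pow_near hy1.le hC
    have hsub : A ∩ Set.Ico 0 y ⊆
        (A ∩ Set.Ico 0 1) ∪ ⋃ j ∈ Finset.range (J+1), (A ∩ Set.Ico (C^j) (C^(j+1))) := by
      rintro z ⟨hzA, hz0, hzy⟩
      rcases lt_or_ge z 1 with hz1 | hz1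
      · exact Or.inl ⟨hzA, hz0, hz1⟩
      · obtain ⟨j, hj1, hj2⟩ := exists_nat_pow_near hz1 hC
        have hjJ : j < J + 1 := by
          have hpow : (C:ℝ)^j < C^(J+1) := lt_of_le_of_lt hj1 (lt_trans hzy hJ2)
          exact (pow_lt_pow_iff_right₀ hC).1 hpow
        refine Or.inr ?_
        simp only [Set.mem_iUnion, Finset.mem_range]
        exact ⟨j, hjJ, hzA, hj1, hj2⟩
    have hvle : volume (A ∩ Set.Ico 0 y) ≤
        volume (A ∩ Set.Ico 0 1) +
          ∑ j ∈ Finset.range (J+1), volume (A ∩ Set.Ico (C^j) (C^(j+1))) := by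
      refine le_trans (measure_mono hsub) ?_
      refine le_trans (measure_union_le _ _) ?_
      exact add_le_add le_rfl (measure_biUnion_finset_le (μ := volume) _ _)
    have hfin1 : volume (A ∩ Set.Ico 0 1) ≠ ⊤ := vol_inter_Ico_ne_top _ _ _
    have hfins : ∀ j ∈ Finset.range (J+1),
        volume (A ∩ Set.Ico ((C:ℝ)^j) (C^(j+1))) ≠ ⊤ := fun j _ => vol_inter_Ico_ne_top _ _ _
    have hsumfin : (∑ j ∈ Finset.range (J+1), volume (A ∩ Set.Ico ((C:ℝ)^j) (C^(j+1)))) ≠ ⊤ :=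
      (ENNReal.sum_lt_top.2 fun j hj => lt_top_iff_ne_top.2 (hfins j hj)).ne
    have hreal : Sfn A y ≤ (volume (A ∩ Set.Ico 0 1)).toReal +
        ∑ j ∈ Finset.range (J+1), (volume (A ∩ Set.Ico ((C:ℝ)^j) (C^(j+1)))).toReal := by
      rw [Sfn]
      have := ENNReal.toReal_mono (by
        exact ENNReal.add_ne_top.2 ⟨hfin1, hsumfin⟩) hvle
      rwa [ENNReal.toReal_add hfin1 hsumfin, ENNReal.toReal_sum hfins] at this
    have h1 : (volume (A ∩ Set.Ico 0 1)).toReal ≤ 1 := by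
      have := Sfn_le_self (A := A) (y := 1) zero_le_one
      simpa [Sfn] using this
    have h2 : ∑ j ∈ Finset.range (J+1), (volume (A ∩ Set.Ico ((C:ℝ)^j) (C^(j+1)))).toReal ≤
        t * (C^(J+1) - 1) := by
      have hterm : ∀ j ∈ Finset.range (J+1),
          (volume (A ∩ Set.Ico ((C:ℝ)^j) (C^(j+1)))).toReal ≤ t * (C-1) * C^j := by
        intro j _
        rw [vol_block_eq_tau hA hC j]
        have hpos : (0:ℝ) < C^j * (C-1) := mul_pos (pow_pos hCpos j) (by linarith)
        nlinarith [htau_le j, hpos]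
      refine le_trans (Finset.sum_le_sum hterm) ?_
      rw [← Finset.mul_sum, geom_sum_eq (ne_of_gt hC) (J+1)]
      have : (C - 1) * ((C^(J+1) - 1)/(C-1)) = C^(J+1) - 1 := by
        rw [mul_comm, div_mul_cancel₀ _ (ne_of_gt (by linarith : (0:ℝ) < C - 1))]
      rw [mul_assoc, this]
    have h3 : t * (C^(J+1) - 1) ≤ C * t * y := by
      have hCJ : (C:ℝ)^(J+1) ≤ C * y := by
        rw [pow_succ]
        calc (C:ℝ)^J * C = C * C^J := by ring
        _ ≤ C * y := by nlinarith [hJ1]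
      nlinarith [hCJ, ht0]
    linarith [hreal, h1, h2, h3]

end tauf

/-- For a weakly thinnable pair `(F, μ)`, every `A ∈ F` and every `C > 1`:
`μ(A) ≤ C · sup_{j∈ℕ} τ_A(C,j)`. -/
theorem stmt14 (F : Set (Set ℝ)) (μ : Set ℝ → ℝ) (hWTP : IsWTP F μ)
    (A : Set ℝ) (hA : A ∈ F) (C : ℝ) (hC : 1 < C) :
    μ A ≤ C * ⨆ j : ℕ, tau A C j := by
  have hpair := hWTP.pair
  have hAM : A ∈ Mcal := hWTP.subset_Mcal hA
  have hAmeas : MeasurableSet A := mcal_measurable hAM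
  have hAray : A ⊆ Ray := hpair.fsystem.subset_ray A hA
  have hCpos : (0:ℝ) < C := by linarith
  set t := ⨆ j : ℕ, tau A C j with ht
  have ht0 : 0 ≤ t := Real.iSup_nonneg (tau_nonneg hAmeas hC)
  rcases le_or_gt 1 (C * t) with hs1 | hs1
  · exact le_trans (hpair.le_one A hA) hs1
  · refine le_of_forall_pos_le_add ?_
    intro ε hε
    obtain ⟨q, hq1, hq2⟩ := exists_rat_btwn
      (show (C*t : ℝ) < min 1 (C*t + ε) by
        rw [lt_min_iff]; exact ⟨hs1, by linarith⟩)
    have hq01 : (q:ℝ) < 1 := lt_of_lt_of_le hq2 (min_le_left _ _)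
    have hst0 : (0:ℝ) ≤ C * t := mul_nonneg hCpos.le ht0
    have hq0 : (0:ℝ) < q := lt_of_le_of_lt hst0 hq1
    have hq0' : (0:ℚ) < q := by exact_mod_cast hq0
    set b := q.den with hbdef
    set a := q.num.toNat with hadef
    have hb : 0 < b := q.pos
    have hbpos : (0:ℝ) < (b:ℝ) := Nat.cast_pos.2 hb
    have hnum : (0:ℤ) < q.num := Rat.num_pos.2 hq0'
    have hab : (q:ℝ) = (a:ℝ) / (b:ℝ) := by
      rw [Rat.cast_def]
      congr 1
      · rw [hadef]
        exact_mod_cast (Int.toNat_of_nonneg hnum.le).symm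
    have haltb : a < b := by
      have h1 : (a:ℝ) < (b:ℝ) := by
        have := hq01
        rw [hab, div_lt_one hbpos] at this
        exact this
      exact_mod_cast h1
    -- the comparison set B
    set E : ℕ → Set ℝ := fun i => per ((i:ℝ)/b) (1/b) with hE
    have hEF : ∀ i, i < a → E i ∈ F := fun i hi =>
      hWTP.Ccal_subset (per_div_mem_Ccal hb (lt_trans hi haltb))
    have hEdisj : ∀ i j, i < a → j < a → i ≠ j → Disjoint (E i) (E j) := fun i j hi hj hij =>
      per_pair_disjoint hb (lt_trans hi haltb) (lt_trans hj haltb) hij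
    obtain ⟨hBF, hBμ⟩ := mu_biUnion hpair E a hEF hEdisj
    set B := ⋃ i ∈ Finset.range a, E i with hB
    have hμB : μ B = (q:ℝ) := by
      rw [hBμ]
      have hconst : ∀ i ∈ Finset.range a, μ (E i) = 1/(b:ℝ) := by
        intro i hi
        exact mu_per_div hWTP hb (lt_trans (Finset.mem_range.1 hi) haltb)
      rw [Finset.sum_congr rfl hconst, Finset.sum_const, Finset.card_range, nsmul_eq_mul, hab]
      ring
    -- the shift
    set c := 1 + 1/(q:ℝ) with hc
    have hqinv : (0:ℝ) < 1/(q:ℝ) := by positivity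
    have hc0 : (0:ℝ) ≤ c := by rw [hc]; linarith
    have hc1 : (1:ℝ) ≤ c := by rw [hc]; linarith
    obtain ⟨hA'F, hA'μ⟩ := mu_shift hWTP hc0 hA
    set A' := thin (Set.Ici c) A with hA'
    -- pointwise comparison of S-functions
    have hcomp : ∀ x : ℝ, Sfn A' x ≤ Sfn B x := by
      intro x
      rw [hA', Sfn_thin_Ici hc0 hAray]
      rcases lt_or_ge x c with hx | hx
      · have hico : Set.Ico (0:ℝ) (x - c) = ∅ := Set.Ico_eq_empty (by linarith)
        rw [Sfn, hico, Set.inter_empty]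
        simpa using Sfn_nonneg B x
      · have hx1 : (1:ℝ) ≤ x := le_trans hc1 hx
        have h1 : Sfn A (x - c) ≤ C*t*(x-c) + 1 := Sfn_linear_bound hAmeas hC (by linarith)
        have hBlow : (q:ℝ) * (x - 1) ≤ Sfn B x := by
          have hsplit : B ∩ Set.Ico 0 x = ⋃ i ∈ Finset.range a, (E i ∩ Set.Ico 0 x) := by
            ext z
            simp only [hB, Set.mem_inter_iff, Set.mem_iUnion, Finset.mem_range]
            tauto
          have hvol : volume (B ∩ Set.Ico 0 x) =
              ∑ i ∈ Finset.range a, volume (E i ∩ Set.Ico 0 x) := by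
            rw [hsplit]
            refine measure_biUnion_finset ?_ fun i _ =>
              ((per_measurable _ _).inter measurableSet_Ico)
            intro i hi j hj hij
            simp only [Finset.coe_range, Set.mem_Iio] at hi hj
            exact Disjoint.mono Set.inter_subset_left Set.inter_subset_left
              (hEdisj i j hi hj hij)
          have hSfneq : Sfn B x = ∑ i ∈ Finset.range a, Sfn (E i) x := by
            rw [Sfn, hvol, ENNReal.toReal_sum fun i _ => vol_inter_Ico_ne_top _ _ _]
            rfl
          have hterm : ∀ i ∈ Finset.range a, (1/(b:ℝ)) * (x - 1) ≤ Sfn (E i) x := by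
            intro i hi
            refine Sfn_per_lower (by positivity) (by positivity) ?_ hx1
            rw [← add_div, div_le_one hbpos]
            have : i + 1 ≤ b := lt_trans (Finset.mem_range.1 hi) haltb
            exact_mod_cast this
          calc (q:ℝ) * (x - 1) = (a:ℝ) * ((1/(b:ℝ)) * (x - 1)) := by rw [hab]; ring
          _ = ∑ _i ∈ Finset.range a, (1/(b:ℝ)) * (x - 1) := by
              rw [Finset.sum_const, Finset.card_range, nsmul_eq_mul]
          _ ≤ ∑ i ∈ Finset.range a, Sfn (E i) x := Finset.sum_le_sum hterm
          _ = Sfn B x := hSfneq.symm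
        have hqc : (q:ℝ) * c = q + 1 := by
          rw [hc]
          field_simp
        have hmid : C*t*(x - c) + 1 ≤ (q:ℝ)*(x-1) := by
          have hkey : ((q:ℝ) - C*t) * c ≤ ((q:ℝ) - C*t) * x :=
            mul_le_mul_of_nonneg_left hx (by linarith)
          nlinarith [hkey, hqc]
        linarith
    have hP2 := hWTP.P2 B hBF A' hA'F hcomp
    calc μ A = μ A' := hA'μ.symm
    _ ≤ μ B := hP2
    _ = (q:ℝ) := hμB
    _ ≤ C*t + ε := le_of_lt (lt_of_lt_of_le hq2 (min_le_right _ _))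


end UPN
end
end

section
/- Let (X, d) be a metric space carrying a uniform measure ν with ν(X) = ∞, let h(r) = ν(B(x,r)) (independent of x) and assume that for every C > 0, lim_{r→∞} h(r+C)/h(r) = 1. Let ν̄ be the completion of ν and A a set measurable for ν̄. For u ≥ 0 set r⁻(u) = sup{r ∈ [0,∞) : h(r) ≤ u} and r⁺(u) = r⁻(u) + 1. Then for all fixed x, y ∈ X, the difference ν̄(B(x, r⁻(u)) ∩ A)/h(r⁻(u)) − ν̄(B(y, r⁺(u)) ∩ A)/h(r⁺(u)) tends to 0 as u → ∞. -/
open MeasureTheory Filter Set Topology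

noncomputable section

namespace UPN

/-- A Borel measure `ν` on a metric space is uniform if all open balls of equal
(positive) radius have equal measure, which is positive and finite. -/
def IsUniformMeasure {X : Type*} [MetricSpace X] [MeasurableSpace X]
    (ν : Measure X) : Prop :=
  ∀ r : ℝ, 0 < r → ∀ x y : X,
    0 < ν (Metric.ball x r) ∧ ν (Metric.ball x r) = ν (Metric.ball y r) ∧
      ν (Metric.ball x r) < ⊤

/-- `r⁻(u) = sup {r ≥ 0 : h(r) ≤ u}`. -/
def rminus (h : ℝ → ℝ) (u : ℝ) : ℝ := sSup {r : ℝ | 0 ≤ r ∧ h r ≤ u}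

/-- Let `ν` be a uniform measure on a metric space `X` with `ν(X) = ∞`, let
`h(r)` be the common measure of open balls of radius `r`, and assume
`h(r+C)/h(r) → 1` as `r → ∞` for every `C > 0`. Then for any set `A` measurable
for the completion `ν̄` of `ν` (on completion-measurable sets `ν̄` is given by
the outer measure of `ν`) and any `x, y ∈ X`,
`ν̄(B(x,r⁻(u)) ∩ A)/h(r⁻(u)) − ν̄(B(y,r⁺(u)) ∩ A)/h(r⁺(u)) → 0` as `u → ∞`,
where `r⁺(u) = r⁻(u) + 1`. -/
theorem stmt16 {X : Type*} [MetricSpace X] [MeasurableSpace X] [BorelSpace X]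
    (ν : Measure X) (hν : IsUniformMeasure ν) (hinf : ν Set.univ = ⊤)
    (h : ℝ → ℝ) (hh : ∀ (x : X) (r : ℝ), h r = (ν (Metric.ball x r)).toReal)
    (hlim : ∀ C : ℝ, 0 < C → Tendsto (fun r => h (r + C) / h r) atTop (𝓝 1))
    (A : Set X) (hA : NullMeasurableSet A ν) (x y : X) :
    Tendsto (fun u =>
        (ν (Metric.ball x (rminus h u) ∩ A)).toReal / h (rminus h u) -
        (ν (Metric.ball y (rminus h u + 1) ∩ A)).toReal / h (rminus h u + 1))
      atTop (𝓝 0) := by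
  classical
  have hfin : ∀ (z : X) (r : ℝ), ν (Metric.ball z r) ≠ ⊤ := by
    intro z r
    rcases le_or_gt r 0 with hr | hr
    · simp [Metric.ball_eq_empty.mpr hr]
    · exact ((hν r hr z z).2.2).ne
  have hmono : Monotone h := by
    intro r s hrs
    rw [hh x r, hh x s]
    exact ENNReal.toReal_mono (hfin x s) (measure_mono (Metric.ball_subset_ball hrs))
  have hpos : ∀ r : ℝ, 0 < r → 0 < h r := by
    intro r hr
    rw [hh x r]
    exact ENNReal.toReal_pos ((hν r hr x x).1).ne' (hfin x r)
  have hub : ∀ b : ℝ, ∃ r : ℝ, b ≤ h r := by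
    intro b
    have hcover : (⋃ n : ℕ, Metric.ball x n) = univ := by
      ext p
      simp only [mem_iUnion, Metric.mem_ball, mem_univ, iff_true]
      obtain ⟨n, hn⟩ := exists_nat_gt (dist p x)
      exact ⟨n, hn⟩
    have hmb : Monotone (fun n : ℕ => Metric.ball x (n : ℝ)) := fun n m hnm =>
      Metric.ball_subset_ball (Nat.cast_le.mpr hnm)
    have hsup : (⨆ n : ℕ, ν (Metric.ball x n)) = ⊤ := by
      rw [← hmb.directed_le.measure_iUnion, hcover, hinf]
    have hlt : ENNReal.ofReal b < ⨆ n : ℕ, ν (Metric.ball x n) := by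
      rw [hsup]; exact ENNReal.ofReal_lt_top
    obtain ⟨n, hn⟩ := lt_iSup_iff.mp hlt
    refine ⟨n, ?_⟩
    rw [hh x n]
    rcases le_or_gt b 0 with hb | hb
    · exact hb.trans ENNReal.toReal_nonneg
    · have h2 := ENNReal.toReal_strict_mono (hfin x n) hn
      rw [ENNReal.toReal_ofReal hb.le] at h2
      exact h2.le
  have hbdd : ∀ u : ℝ, BddAbove {r : ℝ | 0 ≤ r ∧ h r ≤ u} := by
    intro u
    obtain ⟨N, hN⟩ := hub (u + 1)
    refine ⟨N, fun r hr => ?_⟩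
    by_contra hc
    push_neg at hc
    have := hmono hc.le
    linarith [hr.2]
  have rmono : Monotone (rminus h) := by
    intro u v huv
    unfold rminus
    rcases eq_empty_or_nonempty {r : ℝ | 0 ≤ r ∧ h r ≤ u} with he | hne
    · rw [he, Real.sSup_empty]
      exact Real.sSup_nonneg (fun r hr => hr.1)
    · exact csSup_le_csSup (hbdd v) hne (fun r hr => ⟨hr.1, hr.2.trans huv⟩)
  have rtend : Tendsto (rminus h) atTop atTop := by
    apply tendsto_atTop_atTop_of_monotone rmono
    intro b
    exact ⟨h (max b 0), le_trans (le_max_left b 0)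
      (le_csSup (hbdd _) ⟨le_max_right b 0, le_rfl⟩)⟩
  have key : ∀ (z w : X) (s t : ℝ), Metric.ball z s ⊆ Metric.ball w t →
      (ν (Metric.ball w t ∩ A)).toReal ≤
        (ν (Metric.ball z s ∩ A)).toReal + (h t - h s) := by
    intro z w s t hsub
    have hd : ν (Metric.ball w t \ Metric.ball z s)
        = ν (Metric.ball w t) - ν (Metric.ball z s) :=
      measure_diff hsub measurableSet_ball.nullMeasurableSet (hfin z s)
    have h1 : ν (Metric.ball w t ∩ A) ≤
        ν (Metric.ball z s ∩ A) + ν (Metric.ball w t \ Metric.ball z s) := by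
      refine le_trans (measure_mono ?_) (measure_union_le _ _)
      intro p hp
      by_cases hpz : p ∈ Metric.ball z s
      · exact Or.inl ⟨hpz, hp.2⟩
      · exact Or.inr ⟨hp.1, hpz⟩
    have fzA : ν (Metric.ball z s ∩ A) ≠ ⊤ :=
      ne_top_of_le_ne_top (hfin z s) (measure_mono inter_subset_left)
    have fd : ν (Metric.ball w t \ Metric.ball z s) ≠ ⊤ :=
      ne_top_of_le_ne_top (hfin w t) (measure_mono diff_subset)
    have h2 := ENNReal.toReal_mono (ENNReal.add_ne_top.mpr ⟨fzA, fd⟩) h1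
    rw [ENNReal.toReal_add fzA fd, hd,
      ENNReal.toReal_sub_of_le (measure_mono hsub) (hfin w t)] at h2
    rw [hh w t, hh z s]
    linarith
  set C := 1 + dist x y with hCdef
  have hC0 : 0 < C := by positivity
  have hC1 : 1 ≤ C := le_add_of_nonneg_right dist_nonneg
  have glim : Tendsto (fun u => 2 * (h (rminus h u + C) / h (rminus h u) - 1))
      atTop (𝓝 0) := by
    have h1 := (((hlim C hC0).comp rtend).sub_const 1).const_mul 2
    simpa using h1
  have gneg : Tendsto (fun u => -(2 * (h (rminus h u + C) / h (rminus h u) - 1)))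
      atTop (𝓝 0) := by simpa using glim.neg
  have hev : ∀ᶠ u in atTop,
      |(ν (Metric.ball x (rminus h u) ∩ A)).toReal / h (rminus h u) -
        (ν (Metric.ball y (rminus h u + 1) ∩ A)).toReal / h (rminus h u + 1)| ≤
        2 * (h (rminus h u + C) / h (rminus h u) - 1) := by
    filter_upwards [rtend.eventually_ge_atTop 1] with u hu
    set r := rminus h u with hrdef
    have hr0 : (0 : ℝ) < r := lt_of_lt_of_le one_pos hu
    set a := (ν (Metric.ball x r ∩ A)).toReal with hadef
    set b := (ν (Metric.ball y (r + 1) ∩ A)).toReal with hbdef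
    have hp : 0 < h r := hpos r hr0
    have hpq : h r ≤ h (r + 1) := hmono (by linarith)
    have hq : 0 < h (r + 1) := lt_of_lt_of_le hp hpq
    have hqm : h (r + 1) ≤ h (r + C) := hmono (by linarith)
    have ha0 : 0 ≤ a := ENNReal.toReal_nonneg
    have hb0 : 0 ≤ b := ENNReal.toReal_nonneg
    have hap : a ≤ h r := by
      rw [hh x r]
      exact ENNReal.toReal_mono (hfin x r) (measure_mono inter_subset_left)
    have hbq : b ≤ h (r + 1) := by
      rw [hh y (r + 1)]
      exact ENNReal.toReal_mono (hfin y (r + 1)) (measure_mono inter_subset_left)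
    have hsub1 : Metric.ball y (r + 1) ⊆ Metric.ball x (r + C) := by
      intro p hp'
      simp only [Metric.mem_ball] at hp' ⊢
      have ht := dist_triangle p y x
      have hd : dist y x = dist x y := dist_comm y x
      rw [hCdef]
      linarith
    have e1 : b ≤ a + (h (r + C) - h r) := by
      have h1 : b ≤ (ν (Metric.ball x (r + C) ∩ A)).toReal :=
        ENNReal.toReal_mono
          (ne_top_of_le_ne_top (hfin x (r + C)) (measure_mono inter_subset_left))
          (measure_mono (inter_subset_inter_left A hsub1))
      have h2 := key x x r (r + C) (Metric.ball_subset_ball (by linarith))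
      linarith
    have hsub2 : Metric.ball x r ⊆ Metric.ball y (r + C) := by
      intro p hp'
      simp only [Metric.mem_ball] at hp' ⊢
      have ht := dist_triangle p x y
      rw [hCdef]
      linarith
    have e2 : a ≤ b + (h (r + C) - h r) := by
      have h1 : a ≤ (ν (Metric.ball y (r + C) ∩ A)).toReal :=
        ENNReal.toReal_mono
          (ne_top_of_le_ne_top (hfin y (r + C)) (measure_mono inter_subset_left))
          (measure_mono (inter_subset_inter_left A hsub2))
      have h2 := key y y (r + 1) (r + C) (Metric.ball_subset_ball (by linarith))
      linarith
    have hpq0 : 0 < h r * h (r + 1) := mul_pos hp hq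
    rw [abs_le]
    constructor
    · have hnum : -(2 * (h (r + C) - h r) * h (r + 1)) ≤ a * h (r + 1) - b * h r := by
        nlinarith [mul_le_mul_of_nonneg_right (show b - a ≤ h (r + C) - h r by linarith) hq.le,
          mul_nonneg hb0 (sub_nonneg.2 hpq),
          mul_nonneg (show (0:ℝ) ≤ h (r + C) - h r by linarith) hq.le]
      calc -(2 * (h (r + C) / h r - 1))
          = (-(2 * (h (r + C) - h r) * h (r + 1))) / (h r * h (r + 1)) := by
            field_simp
        _ ≤ (a * h (r + 1) - b * h r) / (h r * h (r + 1)) := by gcongr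
        _ = a / h r - b / h (r + 1) := by field_simp
    · have hnum : a * h (r + 1) - b * h r ≤ 2 * (h (r + C) - h r) * h (r + 1) := by
        nlinarith [mul_le_mul_of_nonneg_right (show a - b ≤ h (r + C) - h r by linarith) hq.le,
          mul_le_mul hbq (show h (r + 1) - h r ≤ h (r + C) - h r by linarith)
            (by linarith) hq.le]
      calc a / h r - b / h (r + 1)
          = (a * h (r + 1) - b * h r) / (h r * h (r + 1)) := by field_simp
        _ ≤ (2 * (h (r + C) - h r) * h (r + 1)) / (h r * h (r + 1)) := by gcongr
        _ = 2 * (h (r + C) / h r - 1) := by field_simp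
  refine tendsto_of_tendsto_of_tendsto_of_le_of_le' gneg glim ?_ ?_
  · filter_upwards [hev] with u hu
    exact (abs_le.mp hu).1
  · filter_upwards [hev] with u hu
    exact (abs_le.mp hu).2


end UPN
end
end
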